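/- Let s: ℝ → ℂ be a smooth curve with s'(u) ≠ 0 and s''(u) ≠ 0 and nonzero curvature κ(u) at u. Then the point s̃(u) := s(u) - 2 s'(u)²/s''(u) lies on the curvature circle of s at u, i.e., |s̃(u) - (s(u) + N(u)/κ(u))| = 1/|κ(u)|, where κ = Im(conj(s')·s'')/|s'|³ is the signed curvature (equivalently κ = (i/2)(s'·conj(s'') - conj(s')·s'')/|s'|³) and N = i·s'/|s'| is the unit normal. -/

import Mathlib

open Complex

theorem stmt6 (s : ℝ → ℂ) (u : ℝ) (hs : ContDiff ℝ 2 s)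
    (h1 : deriv s u ≠ 0) (h2 : deriv (deriv s) u ≠ 0)
    (hκ : deriv s u * (starRingEnd ℂ) (deriv (deriv s) u) -
        (starRingEnd ℂ) (deriv s u) * deriv (deriv s) u ≠ 0) :
    let s₀ := s u
    let s₁ := deriv s u
    let s₂ := deriv (deriv s) u
    let κ : ℂ := Complex.I * (s₁ * (starRingEnd ℂ) s₂ - (starRingEnd ℂ) s₁ * s₂) /
      (2 * (‖s₁‖ : ℂ) ^ 3)
    let N : ℂ := Complex.I * s₁ / (‖s₁‖ : ℂ)
    ‖(s₀ - 2 * s₁ ^ 2 / s₂) - (s₀ + N / κ)‖ = 1 / ‖κ‖ := by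
  intro s₀ s₁ s₂ κ N
  have ha : s₁ ≠ 0 := h1
  have hb : s₂ ≠ 0 := h2
  have hD : s₁ * (starRingEnd ℂ) s₂ - (starRingEnd ℂ) s₁ * s₂ ≠ 0 := hκ
  have hr : ‖s₁‖ ≠ 0 := norm_ne_zero_iff.mpr ha
  have hrc : (‖s₁‖ : ℂ) ≠ 0 := by exact_mod_cast hr
  have hmc : (‖s₁‖ : ℂ) ^ 2 = s₁ * (starRingEnd ℂ) s₁ := by
    rw [Complex.mul_conj]
    push_cast [Complex.normSq_eq_norm_sq]
    ring
  have hκc : κ ≠ 0 := by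
    simp only [κ]
    apply div_ne_zero
    · exact mul_ne_zero Complex.I_ne_zero hD
    · exact mul_ne_zero two_ne_zero (pow_ne_zero 3 hrc)
  have hval : (s₀ - 2 * s₁ ^ 2 / s₂) - (s₀ + N / κ) =
      -(2 * s₁ ^ 3 * (starRingEnd ℂ) s₂) /
        (s₂ * (s₁ * (starRingEnd ℂ) s₂ - (starRingEnd ℂ) s₁ * s₂)) := by
    simp only [κ, N]
    rw [show (‖s₁‖ : ℂ) ^ 3 = (‖s₁‖ : ℂ) * (s₁ * (starRingEnd ℂ) s₁) by
      rw [← hmc]; ring]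
    have hD' : s₁ * (starRingEnd ℂ) s₂ - s₂ * (starRingEnd ℂ) s₁ ≠ 0 := by
      intro h; apply hD; linear_combination h
    field_simp
    ring
  rw [hval]
  have habsD : ‖s₁ * (starRingEnd ℂ) s₂ - (starRingEnd ℂ) s₁ * s₂‖ ≠ 0 :=
    norm_ne_zero_iff.mpr hD
  simp only [κ, norm_div, norm_neg, norm_mul, norm_pow, Complex.norm_conj, Complex.norm_I,
    Complex.norm_real, norm_norm, Complex.norm_two, one_mul]
  have hb' : ‖s₂‖ ≠ 0 := norm_ne_zero_iff.mpr hb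
  field_simp
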